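/- In U(gl(3|1))[[t]]: [T, E₂₁] = −(t/2)(T² + 1)E₂₃, [T', E₂₁] = (t/2)(T'² + 1)E₂₃, [T, E₃₂] = (t/2)(T² + 1)E₁₂, [T', E₃₂] = −(t/2)(T'² + 1)E₁₂, [E₂₃, E₂₁] = −(t/4)(T − T')E₂₃², [E₁₂, E₃₂] = (t/4)(T − T')E₁₂², and T, T' commute with E₁₂ and with E₂₃. -/

import Mathlib

noncomputable section

namespace SuperJordanian

open scoped BigOperators

/-- The generalized binomial coefficient `C(1/2, n)`. -/
def cHalf (n : ℕ) : ℂ :=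
  (∏ i ∈ Finset.range n, ((1 : ℂ) / 2 - (i : ℂ))) / (n.factorial : ℂ)

/-- Parity for `gl(3|1)`: `p(i,j) = 1` iff exactly one of `i`, `j` equals the fourth index. -/
def par (i j : Fin 4) : ℕ :=
  if (i = 3 ∧ j ≠ 3) ∨ (i ≠ 3 ∧ j = 3) then 1 else 0

/-- The generator `e_{ij}` in the free algebra. -/
def gen (i j : Fin 4) : FreeAlgebra ℂ (Fin 4 × Fin 4) := FreeAlgebra.ι ℂ (i, j)

/-- Defining relations of the enveloping algebra `U(gl(3|1))`:
`e_{ij} e_{kl} - (-1)^{p(i,j)p(k,l)} e_{kl} e_{ij}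
  = δ_{jk} e_{il} - (-1)^{p(i,j)p(k,l)} δ_{li} e_{kj}`. -/
inductive Rel : FreeAlgebra ℂ (Fin 4 × Fin 4) → FreeAlgebra ℂ (Fin 4 × Fin 4) → Prop
  | mk (i j k l : Fin 4) :
      Rel (gen i j * gen k l - ((-1 : ℂ) ^ (par i j * par k l)) • (gen k l * gen i j))
        ((if j = k then gen i l else 0)
          - ((-1 : ℂ) ^ (par i j * par k l)) • (if l = i then gen k j else 0))

/-- The enveloping algebra `U = U(gl(3|1))`. -/
abbrev U : Type := RingQuot Rel

/-- The image of `e_{ij}` in `U`. -/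
def e (i j : Fin 4) : U := RingQuot.mkAlgHom ℂ Rel (gen i j)

/-- The formal power series ring `U[[t]]`. -/
abbrev V : Type := PowerSeries U

/-- The central formal variable `t`. -/
def tv : V := PowerSeries.X

/-- The inclusion `U → U[[t]]` as constant power series. -/
def C : U →+* V := PowerSeries.C

def h₁₂ : U := e 0 0 - e 1 1
def h₂₃ : U := e 1 1 - e 2 2
def h₁₃ : U := e 0 0 - e 2 2
def h₃₄ : U := e 2 2 + e 3 3
def h₁₄ : U := e 0 0 + e 3 3

/-- `s = Σ_{n ≥ 0} C(1/2, n) t^{2n} e₁₃^{2n}`, so that `s² = 1 + t² e₁₃²`. -/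
def s : V := PowerSeries.mk fun m => if m % 2 = 0 then cHalf (m / 2) • ((e 0 2) ^ m) else 0

def T : V := tv * C (e 0 2) + s
def T' : V := -(tv * C (e 0 2)) + s
def H₁₃ : V := s * C h₁₃
def E₃₁ : V := C (e 2 0) - ((1 : ℂ) / 4) • (tv ^ 2 * C (e 0 2 * (h₁₃ ^ 2 - 1)))
def H₁₂ : V := C h₁₂ + ((1 : ℂ) / 2) • (tv ^ 2 * C ((e 0 2) ^ 2 * h₁₃))
def E₁₂ : V := C (e 0 1)
def E₂₁ : V := C (e 1 0) + ((1 : ℂ) / 4) • (tv ^ 2 * C (e 1 2 * e 0 2 * (2 * h₁₃ + 1)))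
def H₂₃ : V := C h₂₃ + ((1 : ℂ) / 2) • (tv ^ 2 * C ((e 0 2) ^ 2 * h₁₃))
def E₂₃ : V := C (e 1 2)
def E₃₂ : V := C (e 2 1) - ((1 : ℂ) / 4) • (tv ^ 2 * C (e 0 1 * e 0 2 * (2 * h₁₃ + 1)))
def H₃₄ : V := C h₃₄ - ((1 : ℂ) / 2) • (tv ^ 2 * C ((e 0 2) ^ 2 * h₁₃))
def E₃₄ : V := C (e 2 3) - ((1 : ℂ) / 4) • (tv ^ 2 * C (e 0 2 * e 0 3 * (2 * h₁₃ + 1)))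
def E₄₃ : V := C (e 3 2)
def E₁₄ : V := C (e 0 3)
def E₄₁ : V := C (e 3 0) + ((1 : ℂ) / 4) • (tv ^ 2 * C (e 0 2 * e 3 2 * (2 * h₁₃ + 1)))
def H₁₄ : V := C h₁₄ + ((1 : ℂ) / 2) • (tv ^ 2 * C ((e 0 2) ^ 2 * h₁₃))

/-- Commutator `[a, b] = ab - ba`. -/
def br (a b : V) : V := a * b - b * a

/-- Anticommutator `{a, b} = ab + ba`. -/
def ac (a b : V) : V := a * b + b * a


lemma cHalf_zero : cHalf 0 = 1 := by simp [cHalf]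

lemma cHalf_succ (n : ℕ) : ((n:ℂ)+1) * cHalf (n+1) = ((1:ℂ)/2 - n) * cHalf n := by
  unfold cHalf
  rw [Finset.prod_range_succ, Nat.factorial_succ, Nat.cast_mul]
  have h1 : ((n:ℂ)+1) ≠ 0 := by
    have : (0:ℝ) < n + 1 := by positivity
    intro h
    have := congrArg Complex.re h
    push_cast at this
    simp at this
    linarith
  have h2 : ((n.factorial : ℕ):ℂ) ≠ 0 := Nat.cast_ne_zero.mpr n.factorial_ne_zero
  push_cast
  field_simp

def Sv (n : ℕ) : ℂ := ∑ a ∈ Finset.range (n+1), cHalf a * cHalf (n - a)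
def Av (n : ℕ) : ℂ := ∑ a ∈ Finset.range (n+1), (a:ℂ) * (cHalf a * cHalf (n - a))

lemma two_Av (n : ℕ) : 2 * Av n = (n:ℂ) * Sv n := by
  have h : Av n = ∑ a ∈ Finset.range (n+1), ((n:ℂ) - a) * (cHalf (n - a) * cHalf a) := by
    rw [Av, ← Finset.sum_range_reflect]
    apply Finset.sum_congr rfl
    intro j hj
    have hj' : j ≤ n := Finset.mem_range_succ_iff.mp hj
    have h1 : n + 1 - 1 - j = n - j := by omega
    have h2 : n - (n - j) = j := by omega
    rw [h1, h2, Nat.cast_sub hj']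
  rw [two_mul]
  nth_rewrite 2 [h]
  rw [Av, ← Finset.sum_add_distrib, Sv, Finset.mul_sum]
  apply Finset.sum_congr rfl
  intro j hj
  ring

lemma Av_succ (n : ℕ) : Av (n+1) = (1/2 : ℂ) * Sv n - Av n := by
  rw [Av, Finset.sum_range_succ']
  simp only [Nat.cast_zero, zero_mul, add_zero]
  have key : ∀ i ∈ Finset.range (n+1),
      ((i+1:ℕ):ℂ) * (cHalf (i+1) * cHalf (n + 1 - (i+1)))
        = ((1:ℂ)/2 - i) * (cHalf i * cHalf (n - i)) := by
    intro i _
    have h1 : n + 1 - (i+1) = n - i := by omega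
    rw [h1]
    push_cast
    rw [← mul_assoc, cHalf_succ, mul_assoc]
  rw [Finset.sum_congr rfl key]
  rw [Sv, Av, Finset.mul_sum, ← Finset.sum_sub_distrib]
  apply Finset.sum_congr rfl
  intro j hj
  ring

lemma Sv_succ (n : ℕ) : ((n:ℂ)+1) * Sv (n+1) = (1 - (n:ℂ)) * Sv n := by
  have h1 := two_Av (n+1)
  have h2 := Av_succ n
  have h3 := two_Av n
  push_cast at h1
  linear_combination -h1 + 2 * h2 - h3

lemma Sv_zero : Sv 0 = 1 := by simp [Sv, cHalf_zero]

lemma Sv_one : Sv 1 = 1 := by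
  have h := Sv_succ 0
  rw [Sv_zero] at h
  push_cast at h
  linear_combination h

lemma Sv_big : ∀ n, Sv (n+2) = 0 := by
  intro n
  induction n with
  | zero =>
    have h := Sv_succ 1
    rw [Sv_one] at h
    push_cast at h
    have : ((1:ℂ)+1) ≠ 0 := by norm_num
    field_simp at h
    simpa using h
  | succ k ih =>
    have h := Sv_succ (k+2)
    rw [ih] at h
    have hne : ((k+2:ℕ):ℂ)+1 ≠ 0 := by
      push_cast
      intro hc
      have := congrArg Complex.re hc
      push_cast at this
      simp at this
      linarith
    push_cast at h hne ⊢
    rw [mul_zero] at h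
    exact (mul_eq_zero.mp h).resolve_left hne

lemma Sv_eq (n : ℕ) : Sv n = if n ≤ 1 then 1 else 0 := by
  match n with
  | 0 => simp [Sv_zero]
  | 1 => simp [Sv_one]
  | (k+2) => simp [Sv_big k]



def sc (m : ℕ) : ℂ := if m % 2 = 0 then cHalf (m/2) else 0
def wc (m : ℕ) : ℂ := if m % 2 = 0 then (m:ℂ) * cHalf (m/2) else 0

lemma sc_odd {m : ℕ} (h : m % 2 = 1) : sc m = 0 := by simp [sc, h]
lemma wc_odd {m : ℕ} (h : m % 2 = 1) : wc m = 0 := by simp [wc, h]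
lemma sc_two_mul (a : ℕ) : sc (2*a) = cHalf a := by simp [sc, Nat.mul_mod_right, Nat.mul_div_cancel_left a (by norm_num : 0 < 2)]
lemma wc_two_mul (a : ℕ) : wc (2*a) = (2*a : ℕ) * cHalf a := by
  simp [wc, Nat.mul_mod_right, Nat.mul_div_cancel_left a (by norm_num : 0 < 2)]

lemma nat_mul_sc (m : ℕ) : (m:ℂ) * sc m = wc m := by
  unfold sc wc; split <;> simp

lemma wc_rec (m : ℕ) (hm : 2 ≤ m) : wc m = sc (m-2) - wc (m-2) := by
  rcases Nat.even_or_odd m with he | ho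
  · obtain ⟨n, rfl⟩ := he
    have hn : 1 ≤ n := by omega
    obtain ⟨k, rfl⟩ := Nat.exists_eq_add_of_le hn
    have h1 : 1 + k + (1 + k) - 2 = 2*k := by omega
    have h2 : 1 + k + (1 + k) = 2*(k+1) := by omega
    rw [h1, h2, wc_two_mul, sc_two_mul, wc_two_mul]
    have := cHalf_succ k
    push_cast
    linear_combination 2 * this
  · have h1 : m % 2 = 1 := Nat.odd_iff.mp ho
    have h2 : (m-2) % 2 = 1 := by omega
    rw [sc_odd h2, wc_odd h1, wc_odd h2]
    ring

/-- summing an odd-vanishing function over an even range -/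
lemma sum_even (g : ℕ → ℂ) (h : ∀ k, k % 2 = 1 → g k = 0) (n : ℕ) :
    ∑ k ∈ Finset.range (2*n+1), g k = ∑ a ∈ Finset.range (n+1), g (2*a) := by
  induction n with
  | zero => simp
  | succ k ih =>
    have h1 : 2*(k+1)+1 = (2*k+1)+1+1 := by omega
    rw [h1, Finset.sum_range_succ, Finset.sum_range_succ, ih, h (2*k+1) (by omega),
      Finset.sum_range_succ]
    have h2 : 2*k+1+1 = 2*(k+1) := by omega
    rw [h2]
    simp [Finset.sum_range_succ]

lemma sc_conv (m : ℕ) :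
    (∑ ij ∈ Finset.HasAntidiagonal.antidiagonal m, sc ij.1 * sc ij.2) = if m = 0 ∨ m = 2 then 1 else 0 := by
  rw [Finset.Nat.sum_antidiagonal_eq_sum_range_succ_mk]
  rcases Nat.even_or_odd m with he | ho
  · obtain ⟨n, rfl⟩ := he
    have h2 : n + n = 2*n := by omega
    rw [h2]
    have hodd : ∀ k, k % 2 = 1 → sc k * sc (2*n - k) = 0 := fun k hk => by
      rw [sc_odd hk, zero_mul]
    rw [sum_even _ hodd n]
    have : ∀ a ∈ Finset.range (n+1), sc (2*a) * sc (2*n - 2*a) = cHalf a * cHalf (n - a) := by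
      intro a ha
      have ha' : a ≤ n := Finset.mem_range_succ_iff.mp ha
      have : 2*n - 2*a = 2*(n-a) := by omega
      rw [this, sc_two_mul, sc_two_mul]
    rw [Finset.sum_congr rfl this]
    have := Sv_eq n
    rw [Sv] at this
    rw [this]
    simp only [show (2*n = 0 ∨ 2*n = 2) ↔ n ≤ 1 from by omega]
  · have h1 : m % 2 = 1 := Nat.odd_iff.mp ho
    have hz : ∀ k ∈ Finset.range (m+1), sc k * sc (m - k) = 0 := by
      intro k hk
      have hk' : k ≤ m := Finset.mem_range_succ_iff.mp hk
      rcases Nat.even_or_odd k with hek | hok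
      · have hk2 := Nat.even_iff.mp hek
        have : (m - k) % 2 = 1 := by omega
        rw [sc_odd this, mul_zero]
      · rw [sc_odd (Nat.odd_iff.mp hok), zero_mul]
    rw [Finset.sum_eq_zero hz]
    have : ¬(m = 0 ∨ m = 2) := by omega
    simp [this]


lemma erel (i j k l : Fin 4) (hp : par i j * par k l = 0) :
    e i j * e k l - e k l * e i j
      = (if j = k then e i l else 0) - (if l = i then e k j else 0) := by
  have h := RingQuot.mkAlgHom_rel ℂ (Rel.mk i j k l)
  simp only [hp, pow_zero, one_smul, map_sub, map_mul,
    apply_ite (RingQuot.mkAlgHom ℂ Rel), map_zero] at h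
  exact h

lemma u1 : e 0 2 * e 0 1 = e 0 1 * e 0 2 := by
  have h := erel 0 2 0 1 (by decide)
  rw [if_neg (by decide : ¬(2:Fin 4) = 0), if_neg (by decide : ¬(1:Fin 4) = 0),
    sub_zero, sub_eq_zero] at h
  exact h

lemma u2 : e 0 2 * e 1 2 = e 1 2 * e 0 2 := by
  have h := erel 0 2 1 2 (by decide)
  rw [if_neg (by decide : ¬(2:Fin 4) = 1), if_neg (by decide : ¬(2:Fin 4) = 0),
    sub_zero, sub_eq_zero] at h
  exact h

lemma u3 : e 0 2 * e 1 0 = e 1 0 * e 0 2 - e 1 2 := by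
  have h := erel 0 2 1 0 (by decide)
  rw [if_neg (by decide : ¬(2:Fin 4) = 1), if_pos (rfl : (0:Fin 4) = 0),
    zero_sub, sub_eq_iff_eq_add, neg_add_eq_sub] at h
  exact h

lemma u4 : e 0 2 * e 2 1 = e 2 1 * e 0 2 + e 0 1 := by
  have h := erel 0 2 2 1 (by decide)
  rw [if_pos (rfl : (2:Fin 4) = 2), if_neg (by decide : ¬(1:Fin 4) = 0),
    sub_zero, sub_eq_iff_eq_add, add_comm] at h
  exact h

lemma u5a : e 0 2 * e 0 0 = e 0 0 * e 0 2 - e 0 2 := by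
  have h := erel 0 2 0 0 (by decide)
  rw [if_neg (by decide : ¬(2:Fin 4) = 0), if_pos (rfl : (0:Fin 4) = 0),
    zero_sub, sub_eq_iff_eq_add, neg_add_eq_sub] at h
  exact h

lemma u5b : e 0 2 * e 2 2 = e 2 2 * e 0 2 + e 0 2 := by
  have h := erel 0 2 2 2 (by decide)
  rw [if_pos (rfl : (2:Fin 4) = 2), if_neg (by decide : ¬(2:Fin 4) = 0),
    sub_zero, sub_eq_iff_eq_add, add_comm] at h
  exact h

lemma u5 : e 0 2 * h₁₃ = h₁₃ * e 0 2 - 2 * e 0 2 := by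
  unfold h₁₃
  rw [mul_sub, sub_mul, u5a, u5b]
  noncomm_ring

lemma u6a : e 1 2 * e 0 0 = e 0 0 * e 1 2 := by
  have h := erel 1 2 0 0 (by decide)
  rw [if_neg (by decide : ¬(2:Fin 4) = 0), if_neg (by decide : ¬(0:Fin 4) = 1),
    sub_zero, sub_eq_zero] at h
  exact h

lemma u6b : e 1 2 * e 2 2 = e 2 2 * e 1 2 + e 1 2 := by
  have h := erel 1 2 2 2 (by decide)
  rw [if_pos (rfl : (2:Fin 4) = 2), if_neg (by decide : ¬(2:Fin 4) = 1),
    sub_zero, sub_eq_iff_eq_add, add_comm] at h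
  exact h

lemma u6 : e 1 2 * h₁₃ = h₁₃ * e 1 2 - e 1 2 := by
  unfold h₁₃
  rw [mul_sub, sub_mul, u6a, u6b]
  noncomm_ring

lemma u7a : e 0 1 * e 0 0 = e 0 0 * e 0 1 - e 0 1 := by
  have h := erel 0 1 0 0 (by decide)
  rw [if_neg (by decide : ¬(1:Fin 4) = 0), if_pos (rfl : (0:Fin 4) = 0),
    zero_sub, sub_eq_iff_eq_add, neg_add_eq_sub] at h
  exact h

lemma u7b : e 0 1 * e 2 2 = e 2 2 * e 0 1 := by
  have h := erel 0 1 2 2 (by decide)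
  rw [if_neg (by decide : ¬(1:Fin 4) = 2), if_neg (by decide : ¬(2:Fin 4) = 0),
    sub_zero, sub_eq_zero] at h
  exact h

lemma u7 : e 0 1 * h₁₃ = h₁₃ * e 0 1 - e 0 1 := by
  unfold h₁₃
  rw [mul_sub, sub_mul, u7a, u7b]
  noncomm_ring

lemma u8 : e 1 2 * e 1 0 = e 1 0 * e 1 2 := by
  have h := erel 1 2 1 0 (by decide)
  rw [if_neg (by decide : ¬(2:Fin 4) = 1), if_neg (by decide : ¬(0:Fin 4) = 1),
    sub_zero, sub_eq_zero] at h
  exact h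

lemma u9 : e 0 1 * e 2 1 = e 2 1 * e 0 1 := by
  have h := erel 0 1 2 1 (by decide)
  rw [if_neg (by decide : ¬(1:Fin 4) = 2), if_neg (by decide : ¬(1:Fin 4) = 0),
    sub_zero, sub_eq_zero] at h
  exact h

/-- powers of `e 0 2` commute with `e 0 1` and `e 1 2` -/
lemma cpow_p (m : ℕ) : (e 0 2)^m * e 0 1 = e 0 1 * (e 0 2)^m :=
  ((Commute.pow_left (u1 : Commute (e 0 2) (e 0 1)) m)).eq

lemma cpow_b (m : ℕ) : (e 0 2)^m * e 1 2 = e 1 2 * (e 0 2)^m :=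
  ((Commute.pow_left (u2 : Commute (e 0 2) (e 1 2)) m)).eq

lemma p_e10 (m : ℕ) : (e 0 2)^m * e 1 0
    = e 1 0 * (e 0 2)^m - (m:ℂ) • ((e 0 2)^(m-1) * e 1 2) := by
  induction m with
  | zero => simp
  | succ n ih =>
    simp only [Nat.add_sub_cancel]
    rw [pow_succ, mul_assoc, u3, mul_sub, ← mul_assoc, ih, sub_mul, smul_mul_assoc]
    rcases Nat.eq_zero_or_pos n with hn | hn
    · subst hn
      push_cast
      simp
    · obtain ⟨k, rfl⟩ : ∃ k, n = k + 1 := ⟨n-1, by omega⟩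
      have hm : (e 0 2)^(k+1-1) * e 1 2 * e 0 2 = (e 0 2)^(k+1) * e 1 2 := by
        simp only [Nat.add_sub_cancel]
        rw [mul_assoc, ← u2, ← mul_assoc, ← pow_succ]
      rw [hm, mul_assoc, ← pow_succ]
      push_cast
      module

lemma p_e21 (m : ℕ) : (e 0 2)^m * e 2 1
    = e 2 1 * (e 0 2)^m + (m:ℂ) • ((e 0 2)^(m-1) * e 0 1) := by
  induction m with
  | zero => simp
  | succ n ih =>
    simp only [Nat.add_sub_cancel]
    rw [pow_succ, mul_assoc, u4, mul_add, ← mul_assoc, ih, add_mul, smul_mul_assoc]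
    rcases Nat.eq_zero_or_pos n with hn | hn
    · subst hn
      push_cast
      simp
    · obtain ⟨k, rfl⟩ : ∃ k, n = k + 1 := ⟨n-1, by omega⟩
      have hm : (e 0 2)^(k+1-1) * e 0 1 * e 0 2 = (e 0 2)^(k+1) * e 0 1 := by
        simp only [Nat.add_sub_cancel]
        rw [mul_assoc, ← u1, ← mul_assoc, ← pow_succ]
      rw [hm, mul_assoc, ← pow_succ]
      push_cast
      module

lemma p_h13 (m : ℕ) : (e 0 2)^m * h₁₃
    = h₁₃ * (e 0 2)^m - (2*(m:ℂ)) • (e 0 2)^m := by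
  induction m with
  | zero => simp
  | succ n ih =>
    rw [pow_succ, mul_assoc, u5, mul_sub, ← mul_assoc, ih, sub_mul, smul_mul_assoc,
      mul_assoc, ← pow_succ]
    have h2 : (e 0 2)^n * (2 * e 0 2) = (2:ℂ) • (e 0 2)^(n+1) := by
      have : (2 : U) * e 0 2 = (2:ℂ) • e 0 2 := by
        rw [two_smul, two_mul]
      rw [this, mul_smul_comm, ← pow_succ]
    rw [h2]
    push_cast
    module


-- ------------------- series layer -------------------
open PowerSeries

lemma tv_def : tv = (PowerSeries.X : V) := rfl

def w : V := PowerSeries.mk fun m => wc m • (e 0 2)^m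
def dd : V := PowerSeries.mk fun m => wc m • (e 0 2)^(m-1)

lemma s_eq : s = PowerSeries.mk fun m => sc m • (e 0 2)^m := by
  unfold s sc
  apply PowerSeries.ext
  intro n
  rw [PowerSeries.coeff_mk, PowerSeries.coeff_mk]
  split <;> simp

lemma mk_mul_C (F : ℕ → U) (y : U) :
    PowerSeries.mk F * C y = PowerSeries.mk fun m => F m * y := by
  ext m
  simp [C, PowerSeries.coeff_mul_C]

lemma C_mul_mk (y : U) (F : ℕ → U) :
    C y * PowerSeries.mk F = PowerSeries.mk fun m => y * F m := by
  ext m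
  simp [C, PowerSeries.coeff_C_mul]

lemma mker_comm (F : ℕ → ℂ) (f : ℕ → ℕ) (y : U)
    (hy : ∀ k, e 0 2 ^ k * y = y * e 0 2 ^ k) :
    (PowerSeries.mk fun m => F m • (e 0 2)^(f m)) * C y
      = C y * (PowerSeries.mk fun m => F m • (e 0 2)^(f m)) := by
  rw [mk_mul_C, C_mul_mk]
  apply PowerSeries.ext
  intro m
  rw [PowerSeries.coeff_mk, PowerSeries.coeff_mk, smul_mul_assoc, mul_smul_comm, hy]

lemma s_comm (y : U) (hy : ∀ k, e 0 2 ^ k * y = y * e 0 2 ^ k) :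
    s * C y = C y * s := by
  rw [s_eq]; exact mker_comm sc (fun m => m) y hy

lemma w_comm (y : U) (hy : ∀ k, e 0 2 ^ k * y = y * e 0 2 ^ k) :
    w * C y = C y * w := mker_comm wc (fun m => m) y hy

lemma dd_comm (y : U) (hy : ∀ k, e 0 2 ^ k * y = y * e 0 2 ^ k) :
    dd * C y = C y * dd := mker_comm wc (fun m => m - 1) y hy

lemma hc_a : ∀ k, e 0 2 ^ k * e 0 2 = e 0 2 * e 0 2 ^ k :=
  fun k => ((Commute.refl (e 0 2)).pow_left k).eq
lemma hc_p : ∀ k, e 0 2 ^ k * e 0 1 = e 0 1 * e 0 2 ^ k := cpow_p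
lemma hc_b : ∀ k, e 0 2 ^ k * e 1 2 = e 1 2 * e 0 2 ^ k := cpow_b
lemma hc_ba : ∀ k, e 0 2 ^ k * (e 1 2 * e 0 2) = (e 1 2 * e 0 2) * e 0 2 ^ k :=
  fun k => ((Commute.mul_right (u2 : Commute (e 0 2) (e 1 2)) (Commute.refl (e 0 2))).pow_left k).eq
lemma hc_pa : ∀ k, e 0 2 ^ k * (e 0 1 * e 0 2) = (e 0 1 * e 0 2) * e 0 2 ^ k :=
  fun k => ((Commute.mul_right (u1 : Commute (e 0 2) (e 0 1)) (Commute.refl (e 0 2))).pow_left k).eq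

lemma L_sg : s * C (e 1 0) = C (e 1 0) * s - dd * C (e 1 2) := by
  rw [s_eq]
  unfold dd
  rw [mk_mul_C, C_mul_mk, mk_mul_C]
  ext m
  simp only [PowerSeries.coeff_mk, map_sub]
  rw [smul_mul_assoc, p_e10, mul_smul_comm, smul_mul_assoc, smul_sub, smul_smul,
    mul_comm (sc m) ((m:ℕ):ℂ), nat_mul_sc]

lemma L_sk : s * C (e 2 1) = C (e 2 1) * s + dd * C (e 0 1) := by
  rw [s_eq]
  unfold dd
  rw [mk_mul_C, C_mul_mk, mk_mul_C]
  ext m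
  simp only [PowerSeries.coeff_mk, map_add]
  rw [smul_mul_assoc, p_e21, mul_smul_comm, smul_mul_assoc, smul_add, smul_smul,
    mul_comm (sc m) ((m:ℕ):ℂ), nat_mul_sc]

lemma L_sh : s * C h₁₃ = C h₁₃ * s - (2:ℂ) • w := by
  rw [s_eq]
  unfold w
  rw [mk_mul_C, C_mul_mk]
  ext m
  simp only [PowerSeries.coeff_mk, map_sub, PowerSeries.coeff_smul]
  rw [smul_mul_assoc, p_h13, mul_smul_comm, smul_sub, smul_smul, smul_smul]
  congr 2
  rw [← nat_mul_sc]
  ring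

lemma L_ss : s * s = 1 + PowerSeries.X^2 * C (e 0 2 * e 0 2) := by
  rw [s_eq]
  ext m
  rw [PowerSeries.coeff_mul]
  have key : ∀ ij ∈ Finset.HasAntidiagonal.antidiagonal m,
      (PowerSeries.coeff ij.1) (PowerSeries.mk fun k => sc k • (e 0 2)^k)
        * (PowerSeries.coeff ij.2) (PowerSeries.mk fun k => sc k • (e 0 2)^k)
      = (sc ij.1 * sc ij.2) • (e 0 2)^m := by
    intro ij hij
    rw [PowerSeries.coeff_mk, PowerSeries.coeff_mk, smul_mul_smul_comm, ← pow_add,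
      Finset.HasAntidiagonal.mem_antidiagonal.mp hij]
  rw [Finset.sum_congr rfl key, ← Finset.sum_smul, sc_conv, map_add,
    PowerSeries.coeff_one, PowerSeries.coeff_X_pow_mul', C, PowerSeries.coeff_C]
  rcases em (m = 0) with h0 | h0
  · subst h0; norm_num
  rcases em (m = 2) with h2 | h2
  · subst h2; norm_num [pow_two]
  · have hcond : ¬(m = 0 ∨ m = 2) := by tauto
    rw [if_neg hcond, zero_smul, if_neg h0, zero_add]
    rcases em (2 ≤ m) with hm | hm
    · rw [if_pos hm, if_neg (by omega : ¬(m-2 = 0))]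
    · rw [if_neg hm]

lemma L_dd : dd = PowerSeries.X^2 * (C (e 0 2) * s) - PowerSeries.X^2 * (C (e 0 2) * w) := by
  rw [s_eq]
  unfold dd w
  rw [C_mul_mk, C_mul_mk]
  ext m
  simp only [PowerSeries.coeff_mk, map_sub, PowerSeries.coeff_X_pow_mul']
  rcases em (2 ≤ m) with hm | hm
  · rw [if_pos hm, if_pos hm, mul_smul_comm, mul_smul_comm, ← pow_succ']
    have h1 : m - 2 + 1 = m - 1 := by omega
    rw [h1, wc_rec m hm]
    exact sub_smul (sc (m-2)) (wc (m-2)) ((e 0 2)^(m-1))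
  · rw [if_neg hm, if_neg hm, sub_zero]
    have : wc m = 0 := by
      interval_cases m
      · simp [wc]
      · exact wc_odd (by norm_num)
    rw [this, zero_smul]

set_option maxHeartbeats 1000000

-- ------------------- bracket helpers -------------------

lemma br_add_left (a b x : V) : br (a + b) x = br a x + br b x := by
  unfold br; noncomm_ring

lemma br_neg_left (a x : V) : br (-a) x = -br a x := by
  unfold br; rw [neg_mul a x, mul_neg x a]; abel

lemma br_add_right (a x y : V) : br a (x + y) = br a x + br a y := by
  unfold br; noncomm_ring

lemma br_sub_right (a x y : V) : br a (x - y) = br a x - br a y := by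
  unfold br; simp only [mul_sub, sub_mul]; abel

lemma br_smul_right (c : ℂ) (a x : V) : br a (c • x) = c • br a x := by
  unfold br; rw [mul_smul_comm, smul_mul_assoc, smul_sub]

lemma br_one_right (a : V) : br a 1 = 0 := by unfold br; simp

lemma br_mul_comm_left (a q z : V) (h : a * q = q * a) : br a (q * z) = q * br a z := by
  unfold br
  rw [mul_sub, ← mul_assoc, h, mul_assoc, mul_assoc]

lemma br_Xpow (a z : V) (k : ℕ) :
    br a (PowerSeries.X ^ k * z) = PowerSeries.X ^ k * br a z :=
  br_mul_comm_left a _ z ((PowerSeries.commute_X a).pow_right k).eq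

lemma br_CC (x y : U) : br (C x) (C y) = C (x * y - y * x) := by
  unfold br; rw [← map_mul, ← map_mul, ← map_sub]

lemma C_smul (c : ℂ) (x : U) : C (c • x) = c • C x := by
  apply PowerSeries.ext
  intro n
  simp only [C, PowerSeries.coeff_C, PowerSeries.coeff_smul, smul_ite, smul_zero]

-- ------------------- component brackets -------------------

lemma br_u_g : br (PowerSeries.X * C (e 0 2)) (C (e 1 0)) = -(PowerSeries.X * C (e 1 2)) := by
  unfold br
  rw [mul_assoc, ← map_mul, ← mul_assoc, (PowerSeries.commute_X (C (e 1 0))).eq,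
    mul_assoc, ← map_mul, ← mul_sub, ← map_sub,
    show e 0 2 * e 1 0 - e 1 0 * e 0 2 = -(e 1 2) by
      rw [u3]; exact sub_sub_cancel_left _ _]
  rw [map_neg]
  exact mul_neg PowerSeries.X (C (e 1 2))

lemma br_u_k : br (PowerSeries.X * C (e 0 2)) (C (e 2 1)) = PowerSeries.X * C (e 0 1) := by
  unfold br
  rw [mul_assoc, ← map_mul, ← mul_assoc, (PowerSeries.commute_X (C (e 2 1))).eq,
    mul_assoc, ← map_mul, ← mul_sub, ← map_sub,
    show e 0 2 * e 2 1 - e 2 1 * e 0 2 = e 0 1 by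
      rw [u4]; exact add_sub_cancel_left _ _]

lemma br_u_h : br (PowerSeries.X * C (e 0 2)) (C h₁₃)
    = (-2:ℂ) • (PowerSeries.X * C (e 0 2)) := by
  unfold br
  rw [mul_assoc, ← map_mul, ← mul_assoc, (PowerSeries.commute_X (C h₁₃)).eq,
    mul_assoc, ← map_mul, ← mul_sub, ← map_sub,
    show e 0 2 * h₁₃ - h₁₃ * e 0 2 = (-2:ℂ) • e 0 2 by
      rw [u5, sub_sub_cancel_left, show (2:U) * e 0 2 = (2:ℂ) • e 0 2 by
        rw [two_smul, two_mul]]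
      exact (neg_smul (2:ℂ) (e 0 2)).symm,
    C_smul, mul_smul_comm]

lemma br_u_C (y : U) (hy : e 0 2 * y = y * e 0 2) :
    br (PowerSeries.X * C (e 0 2)) (C y) = 0 := by
  unfold br
  rw [mul_assoc, ← map_mul, ← mul_assoc, (PowerSeries.commute_X (C y)).eq,
    mul_assoc, ← map_mul, hy, sub_self]

lemma br_s_C (y : U) (hy : ∀ k, e 0 2 ^ k * y = y * e 0 2 ^ k) : br s (C y) = 0 := by
  unfold br
  rw [s_comm y hy, sub_self]

lemma br_s_g : br s (C (e 1 0)) = -(dd * C (e 1 2)) := by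
  unfold br
  rw [L_sg]
  exact sub_sub_cancel_left _ _

lemma br_s_k : br s (C (e 2 1)) = dd * C (e 0 1) := by
  unfold br
  rw [L_sk]
  exact add_sub_cancel_left _ _

lemma br_s_h : br s (C h₁₃) = (-2:ℂ) • w := by
  unfold br
  rw [L_sh, sub_sub_cancel_left]
  exact (neg_smul (2:ℂ) w).symm

-- ------------------- T-level brackets -------------------

lemma T_eq : T = PowerSeries.X * C (e 0 2) + s := rfl
lemma T'_eq : T' = -(PowerSeries.X * C (e 0 2)) + s := rfl

lemma br_T_g : br T (C (e 1 0)) = -(PowerSeries.X * C (e 1 2)) - dd * C (e 1 2) := by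
  rw [T_eq, br_add_left, br_u_g, br_s_g]
  abel

lemma br_T'_g : br T' (C (e 1 0)) = PowerSeries.X * C (e 1 2) - dd * C (e 1 2) := by
  rw [T'_eq, br_add_left, br_neg_left, br_u_g, br_s_g]
  abel

lemma br_T_k : br T (C (e 2 1)) = PowerSeries.X * C (e 0 1) + dd * C (e 0 1) := by
  rw [T_eq, br_add_left, br_u_k, br_s_k]

lemma br_T'_k : br T' (C (e 2 1)) = -(PowerSeries.X * C (e 0 1)) + dd * C (e 0 1) := by
  rw [T'_eq, br_add_left, br_neg_left, br_u_k, br_s_k]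

lemma br_T_h : br T (C h₁₃) = (-2:ℂ) • (PowerSeries.X * C (e 0 2)) + (-2:ℂ) • w := by
  rw [T_eq, br_add_left, br_u_h, br_s_h]

lemma br_T'_h : br T' (C h₁₃) = (2:ℂ) • (PowerSeries.X * C (e 0 2)) + (-2:ℂ) • w := by
  rw [T'_eq, br_add_left, br_neg_left, br_u_h, br_s_h]
  module

lemma br_T_p : br T (C (e 0 1)) = 0 := by
  rw [T_eq, br_add_left, br_u_C _ u1, br_s_C _ hc_p, add_zero]

lemma br_T'_p : br T' (C (e 0 1)) = 0 := by
  rw [T'_eq, br_add_left, br_neg_left, br_u_C _ u1, br_s_C _ hc_p, neg_zero, add_zero]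

lemma br_T_b : br T (C (e 1 2)) = 0 := by
  rw [T_eq, br_add_left, br_u_C _ u2, br_s_C _ hc_b, add_zero]

lemma br_T'_b : br T' (C (e 1 2)) = 0 := by
  rw [T'_eq, br_add_left, br_neg_left, br_u_C _ u2, br_s_C _ hc_b, neg_zero, add_zero]

-- commutation of T, T' with constants commuting with e02

lemma u_comm_C (y : U) (h1 : e 0 2 * y = y * e 0 2) :
    (PowerSeries.X * C (e 0 2)) * C y = C y * (PowerSeries.X * C (e 0 2)) := by
  rw [mul_assoc, ← map_mul, h1, map_mul, ← mul_assoc, ← (PowerSeries.commute_X (C y)).eq,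
    mul_assoc]

lemma T_comm_C (y : U) (h1 : e 0 2 * y = y * e 0 2)
    (hk : ∀ k, e 0 2 ^ k * y = y * e 0 2 ^ k) : T * C y = C y * T := by
  rw [T_eq, add_mul, mul_add, u_comm_C y h1, s_comm y hk]

lemma T'_comm_C (y : U) (h1 : e 0 2 * y = y * e 0 2)
    (hk : ∀ k, e 0 2 ^ k * y = y * e 0 2 ^ k) : T' * C y = C y * T' := by
  rw [T'_eq, add_mul, mul_add, neg_mul (PowerSeries.X * C (e 0 2)) (C y),
    mul_neg (C y) (PowerSeries.X * C (e 0 2)), u_comm_C y h1, s_comm y hk]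

lemma hba1 : e 0 2 * (e 1 2 * e 0 2) = (e 1 2 * e 0 2) * e 0 2 := by
  have := hc_ba 1
  simpa using this

lemma hpa1 : e 0 2 * (e 0 1 * e 0 2) = (e 0 1 * e 0 2) * e 0 2 := by
  have := hc_pa 1
  simpa using this

-- bracket with C (2 h₁₃ + 1)

lemma br_C2h (aV : V) : br aV (C (2 * h₁₃ + 1)) = (2:ℂ) • br aV (C h₁₃) := by
  have hC : C (2 * h₁₃ + 1) = (2:ℂ) • C h₁₃ + 1 := by
    rw [map_add, map_one, show (2:U) * h₁₃ = (2:ℂ) • h₁₃ by rw [two_smul, two_mul], C_smul]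
  rw [hC, br_add_right, br_one_right, add_zero, br_smul_right]

-- the big brackets

lemma br_T_big : br T (C (e 1 2 * e 0 2 * (2 * h₁₃ + 1)))
    = (-4:ℂ) • (C (e 1 2 * e 0 2) * (PowerSeries.X * C (e 0 2)))
      + (-4:ℂ) • (C (e 1 2 * e 0 2) * w) := by
  rw [map_mul, br_mul_comm_left _ _ _ (T_comm_C _ hba1 hc_ba), br_C2h, br_T_h,
    mul_smul_comm, mul_add, mul_smul_comm, mul_smul_comm, smul_add,
    smul_smul, smul_smul]
  norm_num

lemma br_T'_big : br T' (C (e 1 2 * e 0 2 * (2 * h₁₃ + 1)))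
    = (4:ℂ) • (C (e 1 2 * e 0 2) * (PowerSeries.X * C (e 0 2)))
      + (-4:ℂ) • (C (e 1 2 * e 0 2) * w) := by
  rw [map_mul, br_mul_comm_left _ _ _ (T'_comm_C _ hba1 hc_ba), br_C2h, br_T'_h,
    mul_smul_comm, mul_add, mul_smul_comm, mul_smul_comm, smul_add,
    smul_smul, smul_smul]
  norm_num

lemma br_T_big' : br T (C (e 0 1 * e 0 2 * (2 * h₁₃ + 1)))
    = (-4:ℂ) • (C (e 0 1 * e 0 2) * (PowerSeries.X * C (e 0 2)))
      + (-4:ℂ) • (C (e 0 1 * e 0 2) * w) := by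
  rw [map_mul, br_mul_comm_left _ _ _ (T_comm_C _ hpa1 hc_pa), br_C2h, br_T_h,
    mul_smul_comm, mul_add, mul_smul_comm, mul_smul_comm, smul_add,
    smul_smul, smul_smul]
  norm_num

lemma br_T'_big' : br T' (C (e 0 1 * e 0 2 * (2 * h₁₃ + 1)))
    = (4:ℂ) • (C (e 0 1 * e 0 2) * (PowerSeries.X * C (e 0 2)))
      + (-4:ℂ) • (C (e 0 1 * e 0 2) * w) := by
  rw [map_mul, br_mul_comm_left _ _ _ (T'_comm_C _ hpa1 hc_pa), br_C2h, br_T'_h,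
    mul_smul_comm, mul_add, mul_smul_comm, mul_smul_comm, smul_add,
    smul_smul, smul_smul]
  norm_num

-- squares

lemma huu : (PowerSeries.X * C (e 0 2)) * (PowerSeries.X * C (e 0 2))
    = PowerSeries.X^2 * C (e 0 2 * e 0 2) := by
  rw [mul_assoc, ← mul_assoc (C (e 0 2)), (PowerSeries.commute_X (C (e 0 2))).eq,
    mul_assoc, ← mul_assoc, ← pow_two, ← map_mul]

lemma hsu : s * (PowerSeries.X * C (e 0 2)) = PowerSeries.X * (C (e 0 2) * s) := by
  rw [← mul_assoc, (PowerSeries.commute_X s).eq, mul_assoc, s_comm _ hc_a]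

lemma Tsq : T^2 + 1 = (2:ℂ) • (1 + PowerSeries.X^2 * C (e 0 2 * e 0 2)
    + PowerSeries.X * (C (e 0 2) * s)) := by
  rw [pow_two, T_eq, add_mul, mul_add, mul_add, L_ss, huu, hsu,
    mul_assoc PowerSeries.X (C (e 0 2)) s]
  module

lemma negV (a : V) : -a = (-1:ℂ) • a := (neg_one_smul ℂ a).symm
lemma subV (a b : V) : a - b = a + (-1:ℂ) • b := by rw [sub_eq_add_neg, negV]

lemma T'_eq' : T' = (-1:ℂ) • (PowerSeries.X * C (e 0 2)) + s := by
  rw [T'_eq]; simp only [negV]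

lemma T'sq : T'^2 + 1 = (2:ℂ) • (1 + PowerSeries.X^2 * C (e 0 2 * e 0 2)
    + (-1:ℂ) • (PowerSeries.X * (C (e 0 2) * s))) := by
  rw [pow_two, T'_eq', add_mul, mul_add, mul_add, smul_mul_assoc, smul_mul_assoc,
    mul_smul_comm, L_ss, huu, mul_smul_comm (-1:ℂ) s (PowerSeries.X * C (e 0 2)),
    hsu, mul_assoc PowerSeries.X (C (e 0 2)) s]
  module

-- ------------------- final assembly -------------------

lemma hXX2 (z : V) : PowerSeries.X * (PowerSeries.X * z) = PowerSeries.X^2 * z := by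
  rw [← mul_assoc, ← pow_two]

lemma hXX3 (z : V) : PowerSeries.X * (PowerSeries.X^2 * z) = PowerSeries.X^3 * z := by
  rw [← mul_assoc, ← pow_succ']

lemma hq3 (y : U) : PowerSeries.X^2 * (C y * (PowerSeries.X * C (e 0 2)))
    = PowerSeries.X^3 * C (y * e 0 2) := by
  rw [← mul_assoc (C y) PowerSeries.X (C (e 0 2)), (PowerSeries.commute_X (C y)).eq,
    mul_assoc PowerSeries.X (C y) (C (e 0 2)), ← map_mul, ← mul_assoc, ← pow_succ]

lemma hdd : dd * C (e 1 2)
    = PowerSeries.X^2 * (C (e 1 2 * e 0 2) * s) - PowerSeries.X^2 * (C (e 1 2 * e 0 2) * w) := by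
  rw [L_dd, sub_mul, mul_assoc (PowerSeries.X^2), mul_assoc (PowerSeries.X^2),
    mul_assoc (C (e 0 2)) s (C (e 1 2)), s_comm _ hc_b,
    mul_assoc (C (e 0 2)) w (C (e 1 2)), w_comm _ hc_b,
    ← mul_assoc (C (e 0 2)) (C (e 1 2)) s, ← mul_assoc (C (e 0 2)) (C (e 1 2)) w,
    ← map_mul, u2]

lemma hdd' : dd * C (e 0 1)
    = PowerSeries.X^2 * (C (e 0 1 * e 0 2) * s) - PowerSeries.X^2 * (C (e 0 1 * e 0 2) * w) := by
  rw [L_dd, sub_mul, mul_assoc (PowerSeries.X^2), mul_assoc (PowerSeries.X^2),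
    mul_assoc (C (e 0 2)) s (C (e 0 1)), s_comm _ hc_p,
    mul_assoc (C (e 0 2)) w (C (e 0 1)), w_comm _ hc_p,
    ← mul_assoc (C (e 0 2)) (C (e 0 1)) s, ← mul_assoc (C (e 0 2)) (C (e 0 1)) w,
    ← map_mul, u1]

lemma hZgen (c : ℂ) (y : U) (hyk : ∀ k, e 0 2 ^ k * y = y * e 0 2 ^ k)
    (h1 : e 0 2 * y = y * e 0 2) :
    PowerSeries.X * ((1 + PowerSeries.X^2 * C (e 0 2 * e 0 2)
        + c • (PowerSeries.X * (C (e 0 2) * s))) * C y)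
      = PowerSeries.X * C y + PowerSeries.X^3 * C (y * e 0 2 * e 0 2)
        + c • (PowerSeries.X^2 * (C (y * e 0 2) * s)) := by
  rw [add_mul, add_mul, one_mul,
    mul_assoc (PowerSeries.X^2) (C (e 0 2 * e 0 2)) (C y), ← map_mul,
    show e 0 2 * e 0 2 * y = y * e 0 2 * e 0 2 by rw [mul_assoc, h1, ← mul_assoc, h1],
    smul_mul_assoc c, mul_assoc PowerSeries.X (C (e 0 2) * s) (C y),
    mul_assoc (C (e 0 2)) s (C y), s_comm _ hyk, ← mul_assoc (C (e 0 2)) (C y) s,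
    ← map_mul, h1, mul_add, mul_add, hXX3, mul_smul_comm c, hXX2]

lemma Tsq' : T^2 + 1 = (2:ℂ) • (1 + PowerSeries.X^2 * C (e 0 2 * e 0 2)
    + (1:ℂ) • (PowerSeries.X * (C (e 0 2) * s))) := by
  rw [Tsq]; module

lemma c1 : br T E₂₁ = -(((1 : ℂ) / 2) • (tv * ((T ^ 2 + 1) * E₂₃))) := by
  rw [show E₂₁ = C (e 1 0)
        + ((1:ℂ)/4) • (PowerSeries.X^2 * C (e 1 2 * e 0 2 * (2 * h₁₃ + 1))) from rfl,
    br_add_right, br_smul_right, br_Xpow, br_T_g, br_T_big, hdd,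
    mul_add (PowerSeries.X^2), mul_smul_comm, mul_smul_comm, hq3 (e 1 2 * e 0 2),
    show E₂₃ = C (e 1 2) from rfl, show tv = PowerSeries.X from rfl, Tsq',
    smul_mul_assoc (2:ℂ), mul_smul_comm (2:ℂ), hZgen (1:ℂ) (e 1 2) hc_b u2]
  simp only [subV, negV]
  module

lemma T'sq' : T'^2 + 1 = (2:ℂ) • (1 + PowerSeries.X^2 * C (e 0 2 * e 0 2)
    + (-1:ℂ) • (PowerSeries.X * (C (e 0 2) * s))) := T'sq

lemma c2 : br T' E₂₁ = ((1 : ℂ) / 2) • (tv * ((T' ^ 2 + 1) * E₂₃)) := by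
  rw [show E₂₁ = C (e 1 0)
        + ((1:ℂ)/4) • (PowerSeries.X^2 * C (e 1 2 * e 0 2 * (2 * h₁₃ + 1))) from rfl,
    br_add_right, br_smul_right, br_Xpow, br_T'_g, br_T'_big, hdd,
    mul_add (PowerSeries.X^2), mul_smul_comm, mul_smul_comm, hq3 (e 1 2 * e 0 2),
    show E₂₃ = C (e 1 2) from rfl, show tv = PowerSeries.X from rfl, T'sq',
    smul_mul_assoc (2:ℂ), mul_smul_comm (2:ℂ), hZgen (-1:ℂ) (e 1 2) hc_b u2]
  simp only [subV, negV]
  module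

lemma c3 : br T E₃₂ = ((1 : ℂ) / 2) • (tv * ((T ^ 2 + 1) * E₁₂)) := by
  rw [show E₃₂ = C (e 2 1)
        - ((1:ℂ)/4) • (PowerSeries.X^2 * C (e 0 1 * e 0 2 * (2 * h₁₃ + 1))) from rfl,
    br_sub_right, br_smul_right, br_Xpow, br_T_k, br_T_big', hdd',
    mul_add (PowerSeries.X^2), mul_smul_comm, mul_smul_comm, hq3 (e 0 1 * e 0 2),
    show E₁₂ = C (e 0 1) from rfl, show tv = PowerSeries.X from rfl, Tsq',
    smul_mul_assoc (2:ℂ), mul_smul_comm (2:ℂ), hZgen (1:ℂ) (e 0 1) hc_p u1]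
  simp only [subV, negV]
  module

lemma c4 : br T' E₃₂ = -(((1 : ℂ) / 2) • (tv * ((T' ^ 2 + 1) * E₁₂))) := by
  rw [show E₃₂ = C (e 2 1)
        - ((1:ℂ)/4) • (PowerSeries.X^2 * C (e 0 1 * e 0 2 * (2 * h₁₃ + 1))) from rfl,
    br_sub_right, br_smul_right, br_Xpow, br_T'_k, br_T'_big', hdd',
    mul_add (PowerSeries.X^2), mul_smul_comm, mul_smul_comm, hq3 (e 0 1 * e 0 2),
    show E₁₂ = C (e 0 1) from rfl, show tv = PowerSeries.X from rfl, T'sq',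
    smul_mul_assoc (2:ℂ), mul_smul_comm (2:ℂ), hZgen (-1:ℂ) (e 0 1) hc_p u1]
  simp only [subV, negV]
  module

-- conjuncts 5 and 6

lemma zeq : e 1 2 * (e 1 2 * e 0 2) = e 0 2 * (e 1 2 * e 1 2) := by
  rw [← mul_assoc]
  exact ((Commute.mul_right (u2 : Commute (e 0 2) (e 1 2)) (u2 : Commute (e 0 2) (e 1 2))).eq).symm

lemma zeq' : e 0 1 * (e 0 1 * e 0 2) = e 0 2 * (e 0 1 * e 0 1) := by
  rw [← mul_assoc]
  exact ((Commute.mul_right (u1 : Commute (e 0 2) (e 0 1)) (u1 : Commute (e 0 2) (e 0 1))).eq).symm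

lemma hswap : e 1 2 * e 0 2 * e 1 2 = e 0 2 * (e 1 2 * e 1 2) := by
  rw [mul_assoc, u2]
  exact zeq

lemma hswap' : e 0 1 * e 0 2 * e 0 1 = e 0 2 * (e 0 1 * e 0 1) := by
  rw [mul_assoc, u1]
  exact zeq'

lemma c5u : e 1 2 * (e 1 2 * e 0 2 * (2 * h₁₃ + 1))
    - e 1 2 * e 0 2 * (2 * h₁₃ + 1) * e 1 2
    = (-2:ℂ) • (e 0 2 * (e 1 2 * e 1 2)) := by
  have h6 : h₁₃ * e 1 2 = e 1 2 * h₁₃ + e 1 2 := by rw [u6]; abel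
  have h2 : (2:U) * h₁₃ = (2:ℂ) • h₁₃ := by rw [two_smul, two_mul]
  have h6' : (2 * h₁₃ + 1) * e 1 2 = e 1 2 * (2 * h₁₃ + 1) + (2:ℂ) • e 1 2 := by
    rw [h2, add_mul, one_mul, mul_add, mul_one, smul_mul_assoc, h6, mul_smul_comm]
    module
  rw [mul_assoc (e 1 2 * e 0 2) (2 * h₁₃ + 1) (e 1 2), h6',
    mul_add (e 1 2 * e 0 2) (e 1 2 * (2 * h₁₃ + 1)) ((2:ℂ) • e 1 2),
    mul_smul_comm (2:ℂ) (e 1 2 * e 0 2) (e 1 2),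
    ← mul_assoc (e 1 2 * e 0 2) (e 1 2) (2 * h₁₃ + 1), hswap,
    ← mul_assoc (e 1 2) (e 1 2 * e 0 2) (2 * h₁₃ + 1), zeq]
  module

lemma c6u : e 0 1 * (e 0 1 * e 0 2 * (2 * h₁₃ + 1))
    - e 0 1 * e 0 2 * (2 * h₁₃ + 1) * e 0 1
    = (-2:ℂ) • (e 0 2 * (e 0 1 * e 0 1)) := by
  have h7 : h₁₃ * e 0 1 = e 0 1 * h₁₃ + e 0 1 := by rw [u7]; abel
  have h2 : (2:U) * h₁₃ = (2:ℂ) • h₁₃ := by rw [two_smul, two_mul]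
  have h7' : (2 * h₁₃ + 1) * e 0 1 = e 0 1 * (2 * h₁₃ + 1) + (2:ℂ) • e 0 1 := by
    rw [h2, add_mul, one_mul, mul_add, mul_one, smul_mul_assoc, h7, mul_smul_comm]
    module
  rw [mul_assoc (e 0 1 * e 0 2) (2 * h₁₃ + 1) (e 0 1), h7',
    mul_add (e 0 1 * e 0 2) (e 0 1 * (2 * h₁₃ + 1)) ((2:ℂ) • e 0 1),
    mul_smul_comm (2:ℂ) (e 0 1 * e 0 2) (e 0 1),
    ← mul_assoc (e 0 1 * e 0 2) (e 0 1) (2 * h₁₃ + 1), hswap',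
    ← mul_assoc (e 0 1) (e 0 1 * e 0 2) (2 * h₁₃ + 1), zeq']
  module

lemma hTT : T - T' = (2:ℂ) • (PowerSeries.X * C (e 0 2)) := by
  rw [T_eq, T'_eq]; simp only [subV, negV]; module

lemma hx5 : PowerSeries.X * ((PowerSeries.X * C (e 0 2)) * C (e 1 2 * e 1 2))
    = PowerSeries.X^2 * C (e 0 2 * (e 1 2 * e 1 2)) := by
  rw [mul_assoc PowerSeries.X (C (e 0 2)) (C (e 1 2 * e 1 2)), ← map_mul, hXX2]

lemma hx6 : PowerSeries.X * ((PowerSeries.X * C (e 0 2)) * C (e 0 1 * e 0 1))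
    = PowerSeries.X^2 * C (e 0 2 * (e 0 1 * e 0 1)) := by
  rw [mul_assoc PowerSeries.X (C (e 0 2)) (C (e 0 1 * e 0 1)), ← map_mul, hXX2]

lemma c5 : br E₂₃ E₂₁ = -(((1 : ℂ) / 4) • (tv * ((T - T') * E₂₃ ^ 2))) := by
  rw [show E₂₁ = C (e 1 0)
        + ((1:ℂ)/4) • (PowerSeries.X^2 * C (e 1 2 * e 0 2 * (2 * h₁₃ + 1))) from rfl,
    show E₂₃ = C (e 1 2) from rfl, show tv = PowerSeries.X from rfl,
    br_add_right, br_smul_right, br_Xpow, br_CC, br_CC,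
    show e 1 2 * e 1 0 - e 1 0 * e 1 2 = 0 by rw [u8, sub_self], map_zero, zero_add,
    c5u, C_smul, hTT, pow_two (C (e 1 2)), ← map_mul,
    smul_mul_assoc (2:ℂ), mul_smul_comm (2:ℂ), hx5,
    mul_smul_comm (-2:ℂ) (PowerSeries.X^2) (C (e 0 2 * (e 1 2 * e 1 2)))]
  module

lemma c6 : br E₁₂ E₃₂ = ((1 : ℂ) / 4) • (tv * ((T - T') * E₁₂ ^ 2)) := by
  rw [show E₃₂ = C (e 2 1)
        - ((1:ℂ)/4) • (PowerSeries.X^2 * C (e 0 1 * e 0 2 * (2 * h₁₃ + 1))) from rfl,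
    show E₁₂ = C (e 0 1) from rfl, show tv = PowerSeries.X from rfl,
    br_sub_right, br_smul_right, br_Xpow, br_CC, br_CC,
    show e 0 1 * e 2 1 - e 2 1 * e 0 1 = 0 by rw [u9, sub_self], map_zero,
    c6u, C_smul, hTT, pow_two (C (e 0 1)), ← map_mul,
    smul_mul_assoc (2:ℂ), mul_smul_comm (2:ℂ), hx6,
    mul_smul_comm (-2:ℂ) (PowerSeries.X^2) (C (e 0 2 * (e 0 1 * e 0 1)))]
  simp only [subV, negV]
  module

/-- commutators of `T`, `T'` with the deformed bosonic generators of
`U(gl(3|1))[[t]]`. -/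
theorem statement16 :
    br T E₂₁ = -(((1 : ℂ) / 2) • (tv * ((T ^ 2 + 1) * E₂₃))) ∧
    br T' E₂₁ = ((1 : ℂ) / 2) • (tv * ((T' ^ 2 + 1) * E₂₃)) ∧
    br T E₃₂ = ((1 : ℂ) / 2) • (tv * ((T ^ 2 + 1) * E₁₂)) ∧
    br T' E₃₂ = -(((1 : ℂ) / 2) • (tv * ((T' ^ 2 + 1) * E₁₂))) ∧
    br E₂₃ E₂₁ = -(((1 : ℂ) / 4) • (tv * ((T - T') * E₂₃ ^ 2))) ∧
    br E₁₂ E₃₂ = ((1 : ℂ) / 4) • (tv * ((T - T') * E₁₂ ^ 2)) ∧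
    br T E₁₂ = 0 ∧ br T' E₁₂ = 0 ∧ br T E₂₃ = 0 ∧ br T' E₂₃ = 0 := by
  exact ⟨c1, c2, c3, c4, c5, c6, br_T_p, br_T'_p, br_T_b, br_T'_b⟩

end SuperJordanian
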